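/- Let n ≥ 1 be a natural number and let ν, σ, w be real numbers with ν > 0, σ > 0, and w ≥ 0. Set a = (w+νσ)/(1+ν) and b = σ + w/ν. Let φ : ℝ → ℝ be a continuous function such that 0 ≤ φ(t) for all t ∈ [0,b], φ(t) ≤ t for all t ∈ [0,a], and φ(t) ≤ w − ν(t−σ) for all t ∈ [a,b]. Then ∫₀^b n · φ(t)^{n−1} dt ≤ (w+νσ)^n/(ν(1+ν)^{n−1}). -/

import Mathlib

open intervalIntegral

/-- Analytic estimate at the heart of the proof of Proposition 3.4. -/
theorem stmt7 (n : ℕ) (hn : 1 ≤ n) (ν σ w : ℝ)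
    (hν : 0 < ν) (hσ : 0 < σ) (hw : 0 ≤ w)
    (φ : ℝ → ℝ) (hcont : Continuous φ)
    (h0 : ∀ t ∈ Set.Icc (0 : ℝ) (σ + w / ν), 0 ≤ φ t)
    (h1 : ∀ t ∈ Set.Icc (0 : ℝ) ((w + ν * σ) / (1 + ν)), φ t ≤ t)
    (h2 : ∀ t ∈ Set.Icc ((w + ν * σ) / (1 + ν)) (σ + w / ν),
        φ t ≤ w - ν * (t - σ)) :
    (∫ t in (0:ℝ)..(σ + w / ν), (n : ℝ) * (φ t) ^ (n - 1))
      ≤ (w + ν * σ) ^ n / (ν * (1 + ν) ^ (n - 1)) := by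
  set a := (w + ν * σ) / (1 + ν) with ha
  set b := σ + w / ν with hb
  have h1ν : (0:ℝ) < 1 + ν := by linarith
  have hwνσ : 0 ≤ w + ν * σ := by positivity
  have ha0 : 0 ≤ a := by positivity
  have hab : a ≤ b := by
    rw [ha, hb, div_le_iff₀ h1ν]
    have : σ + w / ν = (ν * σ + w) / ν := by field_simp
    rw [this]
    rw [div_mul_eq_mul_div, le_div_iff₀ hν]
    nlinarith [mul_nonneg hw hν.le, mul_nonneg (mul_nonneg hν.le hσ.le) hν.le]
  have hb0 : 0 ≤ b := le_trans ha0 hab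
  have haa : w - ν * (a - σ) = a := by
    rw [ha]; field_simp; ring_nf
  have hba : w - ν * (b - σ) = 0 := by
    rw [hb]; field_simp; ring
  -- integrability
  have hintφ : ∀ x y : ℝ, IntervalIntegrable (fun t => (n:ℝ) * (φ t) ^ (n-1)) MeasureTheory.volume x y :=
    fun x y => (Continuous.intervalIntegrable (continuous_const.mul (hcont.pow _)) x y)
  have hint1 : IntervalIntegrable (fun t : ℝ => (n:ℝ) * t ^ (n-1)) MeasureTheory.volume 0 a :=
    Continuous.intervalIntegrable (continuous_const.mul (continuous_pow _)) 0 a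
  have hint2 : IntervalIntegrable (fun t : ℝ => (n:ℝ) * (w - ν * (t - σ)) ^ (n-1)) MeasureTheory.volume a b :=
    Continuous.intervalIntegrable (continuous_const.mul ((continuous_const.sub (continuous_const.mul (continuous_id.sub continuous_const))).pow _)) a b
  -- split
  have hsplit : (∫ t in (0:ℝ)..b, (n : ℝ) * (φ t) ^ (n - 1))
      = (∫ t in (0:ℝ)..a, (n : ℝ) * (φ t) ^ (n - 1))
        + (∫ t in a..b, (n : ℝ) * (φ t) ^ (n - 1)) :=
    (intervalIntegral.integral_add_adjacent_intervals (hintφ 0 a) (hintφ a b)).symm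
  rw [hsplit]
  -- first piece
  have hIcc1 : ∀ t ∈ Set.Icc (0:ℝ) a, t ∈ Set.Icc (0:ℝ) b :=
    fun t ht => ⟨ht.1, le_trans ht.2 hab⟩
  have hle1 : (∫ t in (0:ℝ)..a, (n : ℝ) * (φ t) ^ (n - 1))
      ≤ ∫ t in (0:ℝ)..a, (n:ℝ) * t ^ (n-1) := by
    apply intervalIntegral.integral_mono_on ha0 (hintφ 0 a) hint1
    intro t ht
    have hφ0 := h0 t (hIcc1 t ht)
    have hφt := h1 t ht
    have := pow_le_pow_left₀ hφ0 hφt (n-1)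
    nlinarith [this]
  have heq1 : (∫ t in (0:ℝ)..a, (n:ℝ) * t ^ (n-1)) = a ^ n := by
    rw [intervalIntegral.integral_const_mul, integral_pow]
    have hns : n - 1 + 1 = n := Nat.succ_pred_eq_of_pos hn
    rw [hns]
    have : (0:ℝ)^n = 0 := zero_pow (by omega)
    rw [this]
    field_simp
    have hc : ((n - 1 : ℕ) : ℝ) + 1 = n := by exact_mod_cast hns
    rw [hc]; ring
  -- second piece
  have hle2 : (∫ t in a..b, (n : ℝ) * (φ t) ^ (n - 1))
      ≤ ∫ t in a..b, (n:ℝ) * (w - ν * (t - σ)) ^ (n-1) := by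
    apply intervalIntegral.integral_mono_on hab (hintφ a b) hint2
    intro t ht
    have hφ0 := h0 t ⟨le_trans ha0 ht.1, ht.2⟩
    have hφt := h2 t ht
    have := pow_le_pow_left₀ hφ0 hφt (n-1)
    nlinarith [this]
  have heq2 : (∫ t in a..b, (n:ℝ) * (w - ν * (t - σ)) ^ (n-1)) = a ^ n / ν := by
    have hderiv : ∀ t ∈ Set.uIcc a b,
        HasDerivAt (fun t => -(w - ν * (t - σ)) ^ n / ν)
          ((n:ℝ) * (w - ν * (t - σ)) ^ (n-1)) t := by
      intro t _
      have h1' : HasDerivAt (fun t : ℝ => w - ν * (t - σ)) (-ν) t := by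
        have : HasDerivAt (fun t : ℝ => t - σ) 1 t := (hasDerivAt_id t).sub_const σ
        simpa using ((this.const_mul ν).const_sub w)
      have h2' := (h1'.pow n).neg.div_const ν
      rw [show (n:ℝ) * (w - ν * (t - σ)) ^ (n-1) = -((n:ℝ) * (w - ν * (t - σ)) ^ (n - 1) * -ν) / ν by
        rw [eq_div_iff hν.ne']; ring]
      exact h2'
    rw [intervalIntegral.integral_eq_sub_of_hasDerivAt hderiv hint2]
    rw [hba, haa]
    have : (0:ℝ)^n = 0 := zero_pow (by omega)
    rw [this]
    ring
  -- combine
  have hrhs : (w + ν * σ) ^ n / (ν * (1 + ν) ^ (n - 1)) = a ^ n + a ^ n / ν := by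
    have hwa : w + ν * σ = a * (1 + ν) := by rw [ha]; field_simp
    rw [hwa, mul_pow]
    have hpow : (1 + ν) ^ n = (1 + ν) ^ (n-1) * (1 + ν) := by
      rw [← pow_succ, Nat.sub_add_cancel hn]
    rw [hpow]
    field_simp
    ring
  rw [hrhs]
  exact add_le_add (heq1 ▸ hle1) (heq2 ▸ hle2)
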